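/- Let α ∈ (0,1) and let f be a pmf on ℕ with finite mean, with pgf Ψ. Let p be the pmf whose pgf is φ(z) = ∏_{i=0}^∞ Ψ(1 − α^i + α^i z), and for each i ≥ 0 let f^{(i)} be the pmf whose pgf is z ↦ Ψ(1 − α^i + α^i z). Then for every r ≥ 0, p(r) = lim_{k→∞} (f^{(0)} ∗ f^{(1)} ∗ ⋯ ∗ f^{(k−1)})(r), where ∗ denotes convolution of pmf's on ℕ, (g ∗ h)(r) = ∑_{j=0}^{r} g(j)·h(r−j). -/

import Mathlib

open Filter

/-- Convolution of two pmf's on ℕ: `(g ∗ h)(r) = ∑_{j=0}^{r} g(j)·h(r−j)`. -/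
noncomputable def conv (g h : ℕ → ℝ) : ℕ → ℝ :=
  fun r => ∑ j ∈ Finset.range (r + 1), g j * h (r - j)

/-- The `k`-factor convolution `g 0 ∗ g 1 ∗ ⋯ ∗ g (k−1)` (the empty convolution being the
point mass at `0`). -/
noncomputable def iterConv (g : ℕ → ℕ → ℝ) : ℕ → ℕ → ℝ
  | 0 => fun r => if r = 0 then 1 else 0
  | k + 1 => conv (iterConv g k) (g k)

lemma hasSum_conv_mul_pow (g h : ℕ → ℝ) (hg0 : ∀ r, 0 ≤ g r) (hh0 : ∀ r, 0 ≤ h r)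
    (hg : Summable g) (hh : Summable h) {z : ℝ} (hz0 : 0 ≤ z) (hz1 : z ≤ 1) :
    HasSum (fun r => conv g h r * z ^ r)
      ((∑' r, g r * z ^ r) * (∑' r, h r * z ^ r)) := by
  have hb : ∀ (u : ℕ → ℝ), (∀ r, 0 ≤ u r) → Summable u →
      Summable fun r => ‖u r * z ^ r‖ := by
    intro u hu0 hu
    refine hu.of_nonneg_of_le (fun n => norm_nonneg _) fun n => ?_
    rw [Real.norm_eq_abs, abs_of_nonneg (mul_nonneg (hu0 n) (pow_nonneg hz0 n))]
    exact mul_le_of_le_one_right (hu0 n) (pow_le_one₀ hz0 hz1)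
  have H := hasSum_sum_range_mul_of_summable_norm (hb g hg0 hg) (hb h hh0 hh)
  have e : (fun n => conv g h n * z ^ n)
      = fun n => ∑ k ∈ Finset.range (n + 1), (g k * z ^ k) * (h (n - k) * z ^ (n - k)) := by
    funext n
    rw [conv, Finset.sum_mul]
    refine Finset.sum_congr rfl fun k hk => ?_
    have hk' : k ≤ n := Nat.lt_succ_iff.mp (Finset.mem_range.mp hk)
    have hz : z ^ k * z ^ (n - k) = z ^ n := by rw [← pow_add, Nat.add_sub_cancel' hk']
    calc g k * h (n - k) * z ^ n = g k * h (n - k) * (z ^ k * z ^ (n - k)) := by rw [hz]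
      _ = g k * z ^ k * (h (n - k) * z ^ (n - k)) := by ring
  rw [e]
  exact H

lemma iterConv_nonneg (g : ℕ → ℕ → ℝ) (h0 : ∀ i r, 0 ≤ g i r) :
    ∀ k r, 0 ≤ iterConv g k r := by
  intro k
  induction k with
  | zero => intro r; simp only [iterConv]; split <;> norm_num
  | succ k ih =>
    intro r
    show 0 ≤ conv (iterConv g k) (g k) r
    exact Finset.sum_nonneg fun j _ => mul_nonneg (ih j) (h0 k _)

lemma iterConv_summable (g : ℕ → ℕ → ℝ) (h0 : ∀ i r, 0 ≤ g i r)
    (h1 : ∀ i, Summable (g i)) : ∀ k, Summable (iterConv g k) := by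
  intro k
  induction k with
  | zero =>
    have : (iterConv g 0) = fun r => if r = 0 then (1:ℝ) else 0 := rfl
    rw [this]
    exact (hasSum_ite_eq 0 1).summable
  | succ k ih =>
    have H := (hasSum_conv_mul_pow (iterConv g k) (g k) (iterConv_nonneg g h0 k) (h0 k)
      ih (h1 k) (z := 1) zero_le_one le_rfl).summable
    simp only [one_pow, mul_one] at H
    exact H.congr (fun r => rfl)

lemma iterConv_hasSum (g : ℕ → ℕ → ℝ) (h0 : ∀ i r, 0 ≤ g i r) (h1 : ∀ i, Summable (g i))
    {z : ℝ} (hz0 : 0 ≤ z) (hz1 : z ≤ 1) :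
    ∀ k, HasSum (fun r => iterConv g k r * z ^ r)
      (∏ i ∈ Finset.range k, ∑' r, g i r * z ^ r) := by
  intro k
  induction k with
  | zero =>
    have e : (fun r => iterConv g 0 r * z ^ r) = fun r => if r = 0 then (1:ℝ) else 0 := by
      funext r
      by_cases hr : r = 0 <;> simp [iterConv, hr]
    rw [e, Finset.range_zero, Finset.prod_empty]
    exact hasSum_ite_eq 0 1
  | succ k ih =>
    have H := hasSum_conv_mul_pow (iterConv g k) (g k) (iterConv_nonneg g h0 k) (h0 k)
      (iterConv_summable g h0 h1 k) (h1 k) hz0 hz1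
    rw [ih.tsum_eq] at H
    rw [Finset.prod_range_succ]
    exact H.congr_fun fun r => rfl

/-- Let `α ∈ (0,1)` and let `f` be a pmf on `ℕ` with finite mean, with pgf `Ψ`.
Let `p` be the pmf whose pgf is `φ(z) = ∏_{i=0}^∞ Ψ(1 − α^i + α^i z)`, and for `i ≥ 0` let
`f⁽ⁱ⁾` be the pmf whose pgf is `z ↦ Ψ(1 − α^i + α^i z)`. Then for every `r ≥ 0`,
`p(r) = lim_{k→∞} (f⁽⁰⁾ ∗ f⁽¹⁾ ∗ ⋯ ∗ f⁽ᵏ⁻¹⁾)(r)`. -/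
theorem stmt_4 (α : ℝ) (hα : α ∈ Set.Ioo (0 : ℝ) 1)
    (f : ℕ → ℝ) (hf0 : ∀ k, 0 ≤ f k) (hf1 : HasSum f 1)
    (hmean : Summable fun k : ℕ => (k : ℝ) * f k)
    (Ψ : ℝ → ℝ) (hΨ : ∀ z, Ψ z = ∑' k : ℕ, f k * z ^ k)
    (p : ℕ → ℝ) (hp0 : ∀ r, 0 ≤ p r) (hp1 : HasSum p 1)
    (hppgf : ∀ z ∈ Set.Icc (0 : ℝ) 1,
      (∑' r : ℕ, p r * z ^ r) = ∏' i : ℕ, Ψ (1 - α ^ i + α ^ i * z))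
    (fi : ℕ → ℕ → ℝ) (hfi0 : ∀ i r, 0 ≤ fi i r) (hfi1 : ∀ i, HasSum (fi i) 1)
    (hfipgf : ∀ i, ∀ z ∈ Set.Icc (0 : ℝ) 1,
      (∑' r : ℕ, fi i r * z ^ r) = Ψ (1 - α ^ i + α ^ i * z)) :
    ∀ r : ℕ, Tendsto (fun k => iterConv fi k r) atTop (nhds (p r)) := by
  obtain ⟨hα0, hα1⟩ := hα
  have hαpow : ∀ i : ℕ, 0 < α ^ i := fun i => pow_pos hα0 i
  have hαpow1 : ∀ i : ℕ, α ^ i ≤ 1 := fun i => pow_le_one₀ hα0.le hα1.le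
  set m : ℝ := ∑' k : ℕ, (k : ℝ) * f k with hm_def
  have hm0 : 0 ≤ m := tsum_nonneg fun k => mul_nonneg (Nat.cast_nonneg k) (hf0 k)
  have hfS : Summable f := hf1.summable
  have hfiS : ∀ i, Summable (fi i) := fun i => (hfi1 i).summable
  have hfile : ∀ i r, fi i r ≤ 1 := fun i r => le_hasSum (hfi1 i) r fun j _ => hfi0 i j
  -- summability of pgf terms
  have hfsum : ∀ y : ℝ, 0 ≤ y → y ≤ 1 → Summable fun k => f k * y ^ k := by
    intro y hy0 hy1
    exact hfS.of_nonneg_of_le (fun k => mul_nonneg (hf0 k) (pow_nonneg hy0 k))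
      (fun k => mul_le_of_le_one_right (hf0 k) (pow_le_one₀ hy0 hy1))
  have hfizsum : ∀ i, ∀ z : ℝ, 0 ≤ z → z ≤ 1 → Summable fun r => fi i r * z ^ r := by
    intro i z hz0 hz1
    exact (hfiS i).of_nonneg_of_le (fun r => mul_nonneg (hfi0 i r) (pow_nonneg hz0 r))
      (fun r => mul_le_of_le_one_right (hfi0 i r) (pow_le_one₀ hz0 hz1))
  have hΨle1 : ∀ y : ℝ, 0 ≤ y → y ≤ 1 → Ψ y ≤ 1 := by
    intro y hy0 hy1
    rw [hΨ y]
    calc (∑' k, f k * y ^ k) ≤ ∑' k, f k :=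
          Summable.tsum_le_tsum (fun k => mul_le_of_le_one_right (hf0 k) (pow_le_one₀ hy0 hy1))
            (hfsum y hy0 hy1) hfS
      _ = 1 := hf1.tsum_eq
  have hΨpos : ∀ y : ℝ, 0 < y → y ≤ 1 → 0 < Ψ y := by
    intro y hy0 hy1
    obtain ⟨k0, hk0⟩ : ∃ k, 0 < f k := by
      by_contra hcon
      push_neg at hcon
      have hz : ∀ k, f k = 0 := fun k => le_antisymm (hcon k) (hf0 k)
      have h0 : HasSum f 0 := by
        have : f = fun _ => (0 : ℝ) := funext hz
        rw [this]
        exact hasSum_zero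
      exact one_ne_zero (hf1.unique h0)
    rw [hΨ y]
    exact lt_of_lt_of_le (mul_pos hk0 (pow_pos hy0 k0))
      (Summable.le_tsum (hfsum y hy0.le hy1) k0 fun j _ => mul_nonneg (hf0 j) (pow_nonneg hy0.le j))
  -- value at zero
  have hfi_zero : ∀ i, fi i 0 = Ψ (1 - α ^ i) := by
    intro i
    have h := hfipgf i 0 ⟨le_refl 0, zero_le_one⟩
    rw [tsum_eq_single 0 (fun b hb => by simp [zero_pow hb])] at h
    simpa using h
  -- Bernoulli bound
  have hΨ_bound : ∀ i : ℕ, 1 - Ψ (1 - α ^ i) ≤ m * α ^ i := by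
    intro i
    set t : ℝ := α ^ i with ht_def
    have ht0 : 0 < t := hαpow i
    have ht1 : t ≤ 1 := hαpow1 i
    have h1t0 : (0:ℝ) ≤ 1 - t := by linarith
    have h1t1 : 1 - t ≤ 1 := by linarith
    have hsum : Summable fun k => f k * (1 - t) ^ k := hfsum _ h1t0 h1t1
    have key : ∀ k : ℕ, f k - f k * (1 - t) ^ k ≤ (k : ℝ) * f k * t := by
      intro k
      have hb : 1 - (k : ℝ) * t ≤ (1 - t) ^ k := by
        have h := one_add_mul_le_pow (a := -t) (by linarith) k
        have e : (1 : ℝ) + -t = 1 - t := by ring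
        rw [e] at h
        linarith [h]
      have h2 : f k * (1 - (1 - t) ^ k) ≤ f k * ((k : ℝ) * t) :=
        mul_le_mul_of_nonneg_left (by linarith) (hf0 k)
      calc f k - f k * (1 - t) ^ k = f k * (1 - (1 - t) ^ k) := by ring
        _ ≤ f k * ((k : ℝ) * t) := h2
        _ = (k : ℝ) * f k * t := by ring
    have e2 : (∑' k, (f k - f k * (1 - t) ^ k)) = 1 - Ψ (1 - t) := by
      rw [Summable.tsum_sub hfS hsum, hf1.tsum_eq, hΨ (1 - t)]
    have h3 : (∑' k, (f k - f k * (1 - t) ^ k)) ≤ ∑' k : ℕ, (k : ℝ) * f k * t :=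
      Summable.tsum_le_tsum key (hfS.sub hsum) (hmean.mul_right t)
    rw [e2] at h3
    calc 1 - Ψ (1 - t) ≤ ∑' k : ℕ, (k : ℝ) * f k * t := h3
      _ = m * t := by rw [tsum_mul_right]
  -- epsilon
  set ε : ℕ → ℝ := fun i => 1 - fi i 0 with hε_def
  have hε0 : ∀ i, 0 ≤ ε i := fun i => by simp only [hε_def]; linarith [hfile i 0]
  have hεle : ∀ i, ε i ≤ m * α ^ i := by
    intro i
    simp only [hε_def]
    rw [hfi_zero i]
    exact hΨ_bound i
  have hεsum : Summable ε :=
    Summable.of_nonneg_of_le hε0 hεle ((summable_geometric_of_lt_one hα0.le hα1).mul_left m)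
  -- pmf facts about iterated convolutions
  have hIpos : ∀ k r, 0 ≤ iterConv fi k r := iterConv_nonneg fi hfi0
  have hIsum1 : ∀ k, HasSum (iterConv fi k) 1 := by
    intro k
    have H := iterConv_hasSum fi hfi0 hfiS (z := 1) zero_le_one le_rfl k
    simp only [one_pow, mul_one] at H
    have e : ∏ i ∈ Finset.range k, ∑' r, fi i r = 1 :=
      Finset.prod_eq_one fun i _ => (hfi1 i).tsum_eq
    rw [e] at H
    exact H
  have hIle1 : ∀ k r, iterConv fi k r ≤ 1 :=
    fun k r => le_hasSum (hIsum1 k) r fun j _ => hIpos k j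
  -- tail sums of fi
  have htail : ∀ i : ℕ, (∑' n : ℕ, fi i (n + 1)) = 1 - fi i 0 := by
    intro i
    have h := Summable.sum_add_tsum_nat_add (f := fi i) 1 (hfiS i)
    rw [(hfi1 i).tsum_eq] at h
    simp only [Finset.sum_range_one] at h
    linarith
  -- one-step bound
  have hstep : ∀ k r, |iterConv fi (k + 1) r - iterConv fi k r| ≤ 2 * ε k := by
    intro k r
    have hdc : iterConv fi (k + 1) r
        = (∑ j ∈ Finset.range r, iterConv fi k j * fi k (r - j))
          + iterConv fi k r * fi k 0 := by
      show conv (iterConv fi k) (fi k) r = _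
      rw [conv, Finset.sum_range_succ, Nat.sub_self]
    set S : ℝ := ∑ j ∈ Finset.range r, iterConv fi k j * fi k (r - j) with hS_def
    have hS0 : 0 ≤ S := Finset.sum_nonneg fun j _ => mul_nonneg (hIpos k j) (hfi0 k _)
    have hS1 : S ≤ ε k := by
      have h1 : S ≤ ∑ j ∈ Finset.range r, fi k (r - j) :=
        Finset.sum_le_sum fun j _ =>
          mul_le_of_le_one_left (hfi0 k _) (hIle1 k j)
      have h2 : (∑ j ∈ Finset.range r, fi k (r - j)) = ∑ j ∈ Finset.range r, fi k (j + 1) := by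
        rw [← Finset.sum_range_reflect (fun j => fi k (j + 1)) r]
        refine Finset.sum_congr rfl fun j hj => ?_
        have := Finset.mem_range.mp hj
        congr 1
        omega
      have h3 : (∑ j ∈ Finset.range r, fi k (j + 1)) ≤ ∑' n : ℕ, fi k (n + 1) :=
        Summable.sum_le_tsum _ (fun n _ => hfi0 k _) ((summable_nat_add_iff 1).2 (hfiS k))
      rw [htail k] at h3
      simp only [hε_def]
      linarith
    have hX0 : 0 ≤ iterConv fi k r := hIpos k r
    have hX1 : iterConv fi k r ≤ 1 := hIle1 k r
    have hεk := hε0 k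
    have hd : iterConv fi (k + 1) r - iterConv fi k r = S - iterConv fi k r * ε k := by
      rw [hdc]
      simp only [hε_def]
      ring
    rw [hd]
    rw [abs_le]
    constructor
    · nlinarith
    · nlinarith
  -- existence of the limit
  have hcauchy : ∀ r, ∃ L, Tendsto (fun k => iterConv fi k r) atTop (nhds L) := by
    intro r
    apply cauchySeq_tendsto_of_complete
    apply cauchySeq_of_summable_dist
    have hb : ∀ k : ℕ, dist (iterConv fi k r) (iterConv fi (k + 1) r) ≤ 2 * ε k := by
      intro k
      rw [Real.dist_eq, abs_sub_comm]
      exact hstep k r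
    exact Summable.of_nonneg_of_le (fun k => dist_nonneg) hb (hεsum.mul_left 2)
  choose q hq using hcauchy
  have hq0 : ∀ r, 0 ≤ q r :=
    fun r => ge_of_tendsto (hq r) (Eventually.of_forall fun k => hIpos k r)
  have hq1 : ∀ r, q r ≤ 1 :=
    fun r => le_of_tendsto (hq r) (Eventually.of_forall fun k => hIle1 k r)
  -- tail error
  set E : ℕ → ℝ := fun k => ∑' i : ℕ, ε (i + k) with hE_def
  have hεsum' : ∀ k : ℕ, Summable fun i => ε (i + k) :=
    fun k => (summable_nat_add_iff k).2 hεsum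
  have hE0 : ∀ k, 0 ≤ E k := fun k => tsum_nonneg fun i => hε0 _
  have hEtend : Tendsto E atTop (nhds 0) := tendsto_sum_nat_add ε
  have hpart : ∀ k d r, |iterConv fi (d + k) r - iterConv fi k r|
      ≤ 2 * ∑ i ∈ Finset.range d, ε (i + k) := by
    intro k d r
    induction d with
    | zero => simp
    | succ d ih =>
      have h1 := hstep (d + k) r
      have e : d + 1 + k = (d + k) + 1 := by omega
      rw [e]
      calc |iterConv fi ((d + k) + 1) r - iterConv fi k r|
          ≤ |iterConv fi ((d + k) + 1) r - iterConv fi (d + k) r|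
            + |iterConv fi (d + k) r - iterConv fi k r| := abs_sub_le _ _ _
        _ ≤ 2 * ε (d + k) + 2 * ∑ i ∈ Finset.range d, ε (i + k) := add_le_add h1 ih
        _ = 2 * ∑ i ∈ Finset.range (d + 1), ε (i + k) := by
            rw [Finset.sum_range_succ]
            ring
  have hqb : ∀ k r, |q r - iterConv fi k r| ≤ 2 * E k := by
    intro k r
    have hlim : Tendsto (fun d => iterConv fi (d + k) r) atTop (nhds (q r)) :=
      (hq r).comp (tendsto_add_atTop_nat k)
    have hlim2 : Tendsto (fun d => |iterConv fi (d + k) r - iterConv fi k r|) atTop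
        (nhds (|q r - iterConv fi k r|)) :=
      ((hlim.sub tendsto_const_nhds).abs)
    refine le_of_tendsto hlim2 (Eventually.of_forall fun d => ?_)
    calc |iterConv fi (d + k) r - iterConv fi k r|
        ≤ 2 * ∑ i ∈ Finset.range d, ε (i + k) := hpart k d r
      _ ≤ 2 * E k := by
          have := Summable.sum_le_tsum (Finset.range d) (fun i _ => hε0 (i + k)) (hεsum' k)
          linarith
  -- lower bound for the factors
  have hψlb : ∀ i : ℕ, ∀ z : ℝ, 0 ≤ z → z ≤ 1 → fi i 0 ≤ Ψ (1 - α ^ i + α ^ i * z) := by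
    intro i z hz0 hz1
    rw [← hfipgf i z ⟨hz0, hz1⟩]
    have h := Summable.le_tsum (hfizsum i z hz0 hz1) 0
      (fun j _ => mul_nonneg (hfi0 i j) (pow_nonneg hz0 j))
    simpa using h
  have harg_pos : ∀ i : ℕ, ∀ z : ℝ, 0 < z → 0 < 1 - α ^ i + α ^ i * z := by
    intro i z hz0
    have h1 := hαpow i
    have h2 := hαpow1 i
    nlinarith
  have harg_le1 : ∀ i : ℕ, ∀ z : ℝ, z ≤ 1 → 1 - α ^ i + α ^ i * z ≤ 1 := by
    intro i z hz1
    have h1 := hαpow i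
    nlinarith
  -- the pgfs agree in the limit
  have Hz : ∀ z : ℝ, 0 < z → z < 1 → (∑' r, q r * z ^ r) = ∑' r, p r * z ^ r := by
    intro z hz0 hz1
    have hzIcc : z ∈ Set.Icc (0 : ℝ) 1 := ⟨hz0.le, hz1.le⟩
    have hgeo : Summable fun r : ℕ => z ^ r := summable_geometric_of_lt_one hz0.le hz1
    have hqzsum : Summable fun r => q r * z ^ r :=
      hgeo.of_nonneg_of_le (fun r => mul_nonneg (hq0 r) (pow_nonneg hz0.le r))
        (fun r => mul_le_of_le_one_left (pow_nonneg hz0.le r) (hq1 r))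
    have hIz : ∀ k, HasSum (fun r => iterConv fi k r * z ^ r)
        (∏ i ∈ Finset.range k, ∑' r, fi i r * z ^ r) :=
      iterConv_hasSum fi hfi0 hfiS hz0.le hz1.le
    -- step 1 : pgfs of iterated convolutions converge to the pgf of q
    have hT1 : Tendsto (fun k => ∑' r, iterConv fi k r * z ^ r) atTop
        (nhds (∑' r, q r * z ^ r)) := by
      rw [tendsto_iff_dist_tendsto_zero]
      have hbound : ∀ k, dist (∑' r, iterConv fi k r * z ^ r) (∑' r, q r * z ^ r)
          ≤ (2 * E k) * (1 - z)⁻¹ := by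
        intro k
        rw [Real.dist_eq, ← Summable.tsum_sub (hIz k).summable hqzsum]
        have h1 : ∀ r : ℕ, ‖iterConv fi k r * z ^ r - q r * z ^ r‖ ≤ (2 * E k) * z ^ r := by
          intro r
          rw [Real.norm_eq_abs, ← sub_mul, abs_mul, abs_pow, abs_of_nonneg hz0.le]
          refine mul_le_mul_of_nonneg_right ?_ (pow_nonneg hz0.le r)
          rw [abs_sub_comm]
          exact hqb k r
        have hsn : Summable fun r => ‖iterConv fi k r * z ^ r - q r * z ^ r‖ :=
          (hgeo.mul_left _).of_nonneg_of_le (fun _ => norm_nonneg _) h1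
        calc |∑' r, (iterConv fi k r * z ^ r - q r * z ^ r)|
            ≤ ∑' r, ‖iterConv fi k r * z ^ r - q r * z ^ r‖ := by
              rw [← Real.norm_eq_abs]
              exact norm_tsum_le_tsum_norm hsn
          _ ≤ ∑' r : ℕ, (2 * E k) * z ^ r := Summable.tsum_le_tsum h1 hsn (hgeo.mul_left _)
          _ = (2 * E k) * (1 - z)⁻¹ := by
              rw [tsum_mul_left, tsum_geometric_of_lt_one hz0.le hz1]
      refine squeeze_zero (fun k => dist_nonneg) hbound ?_
      have h := (hEtend.const_mul (2 : ℝ)).mul_const (1 - z)⁻¹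
      simpa using h
    -- step 2 : those pgfs are the partial products
    have hprod_eq : ∀ k, (∑' r, iterConv fi k r * z ^ r)
        = ∏ i ∈ Finset.range k, Ψ (1 - α ^ i + α ^ i * z) := by
      intro k
      rw [(hIz k).tsum_eq]
      exact Finset.prod_congr rfl fun i _ => hfipgf i z hzIcc
    -- step 3 : multipliability of the infinite product
    have hψpos : ∀ i : ℕ, 0 < Ψ (1 - α ^ i + α ^ i * z) :=
      fun i => hΨpos _ (harg_pos i z hz0) (harg_le1 i z hz1.le)
    have hψle1 : ∀ i : ℕ, Ψ (1 - α ^ i + α ^ i * z) ≤ 1 :=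
      fun i => hΨle1 _ (harg_pos i z hz0).le (harg_le1 i z hz1.le)
    have hψlb2 : ∀ i : ℕ, 1 - m * α ^ i ≤ Ψ (1 - α ^ i + α ^ i * z) := by
      intro i
      have h1 := hψlb i z hz0.le hz1.le
      have h2 := hεle i
      simp only [hε_def] at h2
      linarith
    have hmul : Multipliable fun i : ℕ => Ψ (1 - α ^ i + α ^ i * z) := by
      refine (fun h : Unit → Summable fun i : ℕ => Real.log (Ψ (1 - α ^ i + α ^ i * z)) =>
        Real.multipliable_of_summable_log (fun i => hψpos i) (h ())) ?_
      intro _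
      obtain ⟨N, hN⟩ : ∃ N : ℕ, ∀ i ≥ N, m * α ^ i ≤ 1 / 2 := by
        have ht : Tendsto (fun i : ℕ => m * α ^ i) atTop (nhds 0) := by
          have := (tendsto_pow_atTop_nhds_zero_of_lt_one hα0.le hα1).const_mul m
          simpa using this
        exact eventually_atTop.mp (ht.eventually (eventually_le_nhds (by norm_num)))
      rw [← summable_nat_add_iff N]
      apply Summable.of_abs
      have hgeo2 : Summable fun i : ℕ => (2 * m * α ^ N) * α ^ i :=
        (summable_geometric_of_lt_one hα0.le hα1).mul_left _
      refine Summable.of_nonneg_of_le (fun i => abs_nonneg _) (fun i => ?_) hgeo2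
      set x : ℝ := Ψ (1 - α ^ (i + N) + α ^ (i + N) * z) with hx_def
      have hxpos : 0 < x := hψpos (i + N)
      have hxle1 : x ≤ 1 := hψle1 (i + N)
      have hxlb : 1 - m * α ^ (i + N) ≤ x := hψlb2 (i + N)
      have hsmall : m * α ^ (i + N) ≤ 1 / 2 := hN (i + N) (by omega)
      have hxhalf : (1 : ℝ) / 2 ≤ x := by linarith
      have hinv2 : x⁻¹ ≤ 2 := by
        have hx' : x * x⁻¹ = 1 := mul_inv_cancel₀ (ne_of_gt hxpos)
        nlinarith [mul_nonneg (by linarith : (0:ℝ) ≤ 2 * x - 1) (inv_nonneg.mpr hxpos.le)]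
      have habs : |Real.log x| ≤ 2 * (1 - x) := by
        have hlogle : Real.log x ≤ 0 := Real.log_nonpos hxpos.le hxle1
        rw [abs_of_nonpos hlogle, ← Real.log_inv]
        have h1 : Real.log x⁻¹ ≤ x⁻¹ - 1 :=
          Real.log_le_sub_one_of_pos (inv_pos.mpr hxpos)
        have h2 : x⁻¹ - 1 = (1 - x) * x⁻¹ := by
          field_simp
        have h3 : (1 - x) * x⁻¹ ≤ (1 - x) * 2 :=
          mul_le_mul_of_nonneg_left hinv2 (by linarith)
        linarith
      calc |Real.log x| ≤ 2 * (1 - x) := habs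
        _ ≤ 2 * (m * α ^ (i + N)) := by linarith
        _ = (2 * m * α ^ N) * α ^ i := by
            rw [pow_add]
            ring
    have hT2 : Tendsto (fun k => ∏ i ∈ Finset.range k, Ψ (1 - α ^ i + α ^ i * z)) atTop
        (nhds (∏' i : ℕ, Ψ (1 - α ^ i + α ^ i * z))) := hmul.hasProd.tendsto_prod_nat
    have hT1' : Tendsto (fun k => ∏ i ∈ Finset.range k, Ψ (1 - α ^ i + α ^ i * z)) atTop
        (nhds (∑' r, q r * z ^ r)) := hT1.congr hprod_eq
    have h_eq1 : (∑' r, q r * z ^ r) = ∏' i : ℕ, Ψ (1 - α ^ i + α ^ i * z) :=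
      tendsto_nhds_unique hT1' hT2
    rw [h_eq1, ← hppgf z hzIcc]
  -- coefficient extraction
  have hple1 : ∀ r, p r ≤ 1 := fun r => le_hasSum hp1 r fun j _ => hp0 j
  have hqp : ∀ r, q r = p r := by
    intro r
    induction r using Nat.strong_induction_on with
    | _ r ih =>
    have key : ∀ z : ℝ, 0 < z → z < 1 / 2 → |q r - p r| ≤ 8 * z := by
      intro z hz0 hz12
      have hz1 : z < 1 := by linarith
      have hgeo : Summable fun n : ℕ => z ^ n := summable_geometric_of_lt_one hz0.le hz1
      have hzr : (z : ℝ) ^ r ≠ 0 := pow_ne_zero r hz0.ne'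
      have main : ∀ u : ℕ → ℝ, (∀ n, 0 ≤ u n) → (∀ n, u n ≤ 1) →
          ∃ A : ℝ, |A| ≤ 2 * z ∧
            (∑' n, u n * z ^ n)
              = (∑ n ∈ Finset.range r, u n * z ^ n) + (u r + A) * z ^ r := by
        intro u hu0 hu1
        have hus : Summable fun n => u n * z ^ n :=
          hgeo.of_nonneg_of_le (fun n => mul_nonneg (hu0 n) (pow_nonneg hz0.le n))
            (fun n => mul_le_of_le_one_left (pow_nonneg hz0.le n) (hu1 n))
        have hus2 : Summable fun n => u (n + r) * z ^ n :=
          hgeo.of_nonneg_of_le (fun n => mul_nonneg (hu0 _) (pow_nonneg hz0.le n))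
            (fun n => mul_le_of_le_one_left (pow_nonneg hz0.le n) (hu1 _))
        have habs : ∀ n : ℕ, u (n + 1 + r) * z ^ (n + 1) ≤ z * z ^ n := by
          intro n
          calc u (n + 1 + r) * z ^ (n + 1) ≤ z ^ (n + 1) :=
                mul_le_of_le_one_left (pow_nonneg hz0.le _) (hu1 _)
            _ = z * z ^ n := by rw [pow_succ]; ring
        have hApos : ∀ n : ℕ, 0 ≤ u (n + 1 + r) * z ^ (n + 1) :=
          fun n => mul_nonneg (hu0 _) (pow_nonneg hz0.le _)
        have hAs : Summable fun n => u (n + 1 + r) * z ^ (n + 1) :=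
          (hgeo.mul_left z).of_nonneg_of_le hApos habs
        refine ⟨∑' n, u (n + 1 + r) * z ^ (n + 1), ?_, ?_⟩
        · have h1 : (∑' n, u (n + 1 + r) * z ^ (n + 1)) ≤ ∑' n : ℕ, z * z ^ n :=
            Summable.tsum_le_tsum habs hAs (hgeo.mul_left z)
          have h2 : (0:ℝ) ≤ ∑' n, u (n + 1 + r) * z ^ (n + 1) := tsum_nonneg hApos
          have h3 : (∑' n : ℕ, z * z ^ n) = z * (1 - z)⁻¹ := by
            rw [tsum_mul_left, tsum_geometric_of_lt_one hz0.le hz1]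
          have hinv2 : (1 - z)⁻¹ ≤ 2 := by
            have h1z : (0:ℝ) < 1 - z := by linarith
            have hx' : (1 - z) * (1 - z)⁻¹ = 1 := mul_inv_cancel₀ (ne_of_gt h1z)
            nlinarith [mul_nonneg (by linarith : (0:ℝ) ≤ 2 * (1 - z) - 1)
              (inv_nonneg.mpr h1z.le)]
          have h4 : z * (1 - z)⁻¹ ≤ 2 * z := by nlinarith
          rw [abs_of_nonneg h2]
          linarith
        · have e2 : (∑' n, u (n + r) * z ^ (n + r)) = (∑' n, u (n + r) * z ^ n) * z ^ r := by
            rw [← tsum_mul_right]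
            congr 1
            funext n
            rw [pow_add]
            ring
          have e3 : (∑' n, u (n + r) * z ^ n)
              = u r + ∑' n, u (n + 1 + r) * z ^ (n + 1) := by
            have h := (Summable.sum_add_tsum_nat_add (f := fun n => u (n + r) * z ^ n) 1 hus2).symm
            simp only [Finset.sum_range_one, zero_add, pow_zero, mul_one] at h
            exact h
          rw [← Summable.sum_add_tsum_nat_add r hus, e2, e3]
      obtain ⟨Aq, hAq, hq_eq⟩ := main q hq0 hq1
      obtain ⟨Ap, hAp, hp_eq⟩ := main p hp0 hple1
      have hsum_eq : (∑ n ∈ Finset.range r, q n * z ^ n)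
          = ∑ n ∈ Finset.range r, p n * z ^ n :=
        Finset.sum_congr rfl fun n hn => by rw [ih n (Finset.mem_range.mp hn)]
      have h0 := Hz z hz0 hz1
      rw [hq_eq, hp_eq, hsum_eq] at h0
      have h1 : (q r + Aq) * z ^ r = (p r + Ap) * z ^ r := by linarith
      have h2 : q r + Aq = p r + Ap := mul_right_cancel₀ hzr h1
      have h3 : q r - p r = Ap - Aq := by linarith
      rw [h3]
      calc |Ap - Aq| ≤ |Ap| + |Aq| := abs_sub _ _
        _ ≤ 2 * z + 2 * z := add_le_add hAp hAq
        _ ≤ 8 * z := by linarith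
    by_contra hne
    have hc : 0 < |q r - p r| := abs_pos.mpr (sub_ne_zero.mpr hne)
    have hz0 : (0:ℝ) < min (|q r - p r| / 16) (1 / 4) := lt_min (by positivity) (by norm_num)
    have hz12 : min (|q r - p r| / 16) (1 / 4) < 1 / 2 :=
      lt_of_le_of_lt (min_le_right _ _) (by norm_num)
    have h1 := key _ hz0 hz12
    have h2 : |q r - p r| ≤ 8 * (|q r - p r| / 16) :=
      le_trans h1 (mul_le_mul_of_nonneg_left (min_le_left _ _) (by norm_num))
    linarith
  intro r
  have h := hq r
  rwa [hqp r] at h
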